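/- Let p, r, s, k be pairwise relevant positive integers with p, r, s pairwise coprime and r + s = p·k. For μ ≥ 1 an integer and a = (a_1,…,a_p) ∈ ℤ_{≥0}^p, write A = ⌊μr/p⌋, ρ = μr − pA, δ = 1 if ρ = 0 and δ = 0 otherwise, and S = a_1 + ⋯ + a_p. Define the A-model coefficient c_A(μ,a) as follows: if there exists l ∈ ℤ_{≥0} with Σ_{m=1}^{p−1} m·a_{m+1} = p·l + ρ, set c_A(μ,a) = (1/μ)·[∏_{j=1}^{μk−1}(j−μk)]/(A!·⌊μs/p⌋!) · [∏_{m=1}^{a_1+l}(A − a_1 − l + m)]/[∏_{m=0}^{a_1−1}(a_1 − m − μk)] · [∏_{m=1}^{S−l−1+δ}(μk − A + l − S + m)]/(a_1!⋯a_p!) (and c_A(μ,a) = 0 if no such l exists, noting l is unique when it exists). Define the B-model coefficient c_B(μ,a) as follows: if there exists b ∈ ℤ_{≥0} with b ≥ a_1 and p·b + Σ_{m=1}^{p−1} m·a_{m+1} = r·μ, set c_B(μ,a) = (−1)^{kμ−a_1−1}·[∏_{j=1}^{(Σ_{m=2}^{p} a_m)+b−1}(μk − a_1 − j)]/(a_1!⋯a_p!·(b−a_1)!·μ)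 (and c_B(μ,a) = 0 otherwise; b is unique when it exists). Then c_A(μ,a) = c_B(μ,a) for all μ ≥ 1 and all a ∈ ℤ_{≥0}^p; equivalently, the formal power series Σ_{μ≥1} Σ_a c_A(μ,a)·q_1^{a_1}⋯q_p^{a_p}·X^μ and Σ_{μ≥1} Σ_a c_B(μ,a)·q_1^{a_1}⋯q_p^{a_p}·X^μ in ℚ[[q_1,…,q_p,X]] coincide. -/

import Mathlib

open Finset

/-- ascending product `(c+1)(c+2)⋯(c+N)` -/
noncomputable def prQ (c : ℚ) (N : ℕ) : ℚ := ∏ m ∈ Finset.Icc 1 N, (c + m)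

lemma prQ_zero (c : ℚ) : prQ c 0 = 1 := by simp [prQ]

lemma prQ_succ (c : ℚ) (N : ℕ) : prQ c (N + 1) = prQ c N * (c + (N + 1)) := by
  rw [prQ, prQ, Finset.prod_Icc_succ_top (Nat.le_add_left 1 N)]
  push_cast; ring

lemma prQ_one (c : ℚ) : prQ c 1 = c + 1 := by
  rw [show (1:ℕ) = 0 + 1 from rfl, prQ_succ, prQ_zero]; norm_num

lemma prQ_shift (c : ℚ) (M N : ℕ) : prQ c (M + N) = prQ c M * prQ (c + M) N := by
  induction N with
  | zero => simp [prQ_zero]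
  | succ n ih =>
      rw [show M + (n+1) = (M+n)+1 from rfl, prQ_succ, ih, prQ_succ]
      push_cast; ring

lemma prQ_fact (N : ℕ) : prQ 0 N = (Nat.factorial N : ℚ) := by
  induction N with
  | zero => simp [prQ_zero]
  | succ n ih => rw [prQ_succ, ih, Nat.factorial_succ]; push_cast; ring

lemma prQ_eq_zero (u N : ℕ) (h1 : 1 ≤ u) (h2 : u ≤ N) : prQ (-(u : ℚ)) N = 0 := by
  rw [prQ]
  apply Finset.prod_eq_zero (i := u) (Finset.mem_Icc.2 ⟨h1, h2⟩)
  ring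

lemma prQ_neg_fact (N : ℕ) : prQ (-(N : ℚ) - 1) N = (-1) ^ N * (Nat.factorial N : ℚ) := by
  induction N with
  | zero => simp [prQ_zero]
  | succ n ih =>
      rw [show n + 1 = 1 + n from Nat.add_comm n 1, prQ_shift, prQ_one]
      rw [show -(((1+n : ℕ):ℚ)) - 1 + ((1:ℕ):ℚ) = -(n:ℚ) - 1 from by push_cast; ring, ih]
      have hf : Nat.factorial (1+n) = (n+1) * Nat.factorial n := by
        rw [Nat.add_comm]; exact Nat.factorial_succ n
      rw [hf]; push_cast; ring

lemma prQ_fact_mul (d N : ℕ) :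
    (Nat.factorial d : ℚ) * prQ (d : ℚ) N = (Nat.factorial (d + N) : ℚ) := by
  have := prQ_shift 0 d N
  rw [prQ_fact, prQ_fact, zero_add] at this
  exact this.symm

lemma prQ_key (c : ℤ) (X Y X' Y' : ℕ) (hX : (X : ℤ) = c + X') (hY : (Y : ℤ) = c + Y') :
    prQ 0 X * prQ (c : ℚ) Y' = prQ 0 Y * prQ (c : ℚ) X' := by
  rcases le_or_gt 0 c with hc | hc
  · obtain ⟨t, rfl⟩ := Int.eq_ofNat_of_zero_le hc
    have hX2 : X = t + X' := by exact_mod_cast hX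
    have hY2 : Y = t + Y' := by exact_mod_cast hY
    subst hX2 hY2
    rw [prQ_shift 0 t X', prQ_shift 0 t Y']
    push_cast; ring
  · have hu1 : 1 ≤ (-c).toNat := by omega
    have hcc : (c : ℚ) = -(((-c).toNat : ℕ) : ℚ) := by
      exact_mod_cast (by omega : c = -(((-c).toNat : ℕ) : ℤ))
    have hX' : (-c).toNat ≤ X' := by omega
    have hY' : (-c).toNat ≤ Y' := by omega
    rw [hcc, prQ_eq_zero _ _ hu1 hX', prQ_eq_zero _ _ hu1 hY']
    ring

lemma prQ_ne_zero_of_lt (n N : ℕ) (h : N < n) : prQ (-(n : ℚ)) N ≠ 0 := by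
  rw [prQ]
  apply Finset.prod_ne_zero_iff.2
  intro m hm
  rw [Finset.mem_Icc] at hm
  have : (m : ℚ) < n := by exact_mod_cast lt_of_le_of_lt hm.2 h
  intro h0; nlinarith

lemma icc_to_range (g : ℕ → ℚ) (N : ℕ) :
    ∏ m ∈ Finset.Icc 1 N, g m = ∏ m ∈ Finset.range N, g (m + 1) := by
  induction N with
  | zero => simp
  | succ n ih =>
      rw [Finset.prod_Icc_succ_top (Nat.le_add_left 1 n), ih, Finset.prod_range_succ]

/-- descending product over `Icc 1 N` in terms of `prQ` -/
lemma prod_desc (x : ℚ) (N : ℕ) :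
    ∏ m ∈ Finset.Icc 1 N, (x - m) = prQ (x - N - 1) N := by
  rw [icc_to_range (fun m => x - (m:ℚ)) N, prQ, icc_to_range (fun m => x - N - 1 + (m:ℚ)) N]
  rw [show (fun m => x - ((m+1 : ℕ):ℚ)) = (fun m : ℕ => x - ((m:ℚ) + 1)) from by
    funext m; push_cast; ring]
  rw [← Finset.prod_range_reflect (fun j => x - ((j:ℚ) + 1)) N]
  apply Finset.prod_congr rfl
  intro j hj
  rw [Finset.mem_range] at hj
  have h3 : ((N - 1 - j : ℕ) : ℚ) = (N : ℚ) - 1 - j := by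
    have h1 : j ≤ N - 1 := by omega
    have h2 : 1 ≤ N := by omega
    push_cast [Nat.cast_sub h1, Nat.cast_sub h2]; ring
  rw [h3]; push_cast; ring

/-- descending product over `range N` in terms of `prQ` -/
lemma prod_desc_range (x : ℚ) (N : ℕ) :
    ∏ m ∈ Finset.range N, (x - m) = prQ (x - N) N := by
  rw [prQ, icc_to_range (fun m => x - N + (m:ℚ)) N]
  rw [← Finset.prod_range_reflect (fun j => x - (j:ℚ)) N]
  apply Finset.prod_congr rfl
  intro j hj
  rw [Finset.mem_range] at hj
  have h3 : ((N - 1 - j : ℕ) : ℚ) = (N : ℚ) - 1 - j := by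
    have h1 : j ≤ N - 1 := by omega
    have h2 : 1 ≤ N := by omega
    push_cast [Nat.cast_sub h1, Nat.cast_sub h2]; ring
  rw [h3]; push_cast; ring

set_option maxHeartbeats 1000000 in
/-- Disk mirror theorem for `L_{r,s}` in the orbifold resolved conifold,
as an identity of power-series coefficients: with `p, r, s` pairwise coprime,
`r + s = p·k`, the A-model disk-potential coefficient `c_A(μ,a)` (coming from the
equivariant I-function, the closed mirror map and the disk factor `D'(μ)`) equals
the B-model coefficient `c_B(μ,a)` (coming from `-r` times the part of `W_{0,1}(η,q)`
with `η`-degree divisible by `r`, written in `X = η^r`), for all `μ ≥ 1` and all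
`a = (a₁,…,a_p) ∈ ℤ_{≥0}^p`.  Here `c_A` and `c_B` are characterized by:
if `Σ_{m=1}^{p-1} m·a_{m+1} = p·l + ρ` (with `A = ⌊μr/p⌋`, `ρ = μr - pA`,
`δ = 1` iff `ρ = 0`, `S = a₁+⋯+a_p`) then
`c_A(μ,a) = (1/μ)·[∏_{j=1}^{μk-1}(j-μk)]/(A!·⌊μs/p⌋!)
  ·[∏_{m=1}^{a₁+l}(A-a₁-l+m)]/[∏_{m=0}^{a₁-1}(a₁-m-μk)]
  ·[∏_{m=1}^{S-l-1+δ}(μk-A+l-S+m)]/(a₁!⋯a_p!)`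
and `c_A(μ,a) = 0` if no such `l` exists; if `b ≥ a₁` and
`p·b + Σ_{m=1}^{p-1} m·a_{m+1} = r·μ` then
`c_B(μ,a) = (-1)^{kμ-a₁-1}·[∏_{j=1}^{(Σ_{m=2}^p a_m)+b-1}(μk-a₁-j)]/(a₁!⋯a_p!·(b-a₁)!·μ)`
and `c_B(μ,a) = 0` if no such `b` exists (empty products equal 1). -/
theorem disk_mirror_theorem_coefficients (p r s k : ℕ)
    (hp : 0 < p) (hr : 0 < r) (hs : 0 < s) (hk : 0 < k)
    (hrs : r + s = p * k)
    (h_rs : Nat.Coprime r s) (h_pr : Nat.Coprime p r) (h_ps : Nat.Coprime p s)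
    (cA cB : ℕ → (ℕ → ℕ) → ℚ)
    (hcA1 : ∀ (μ : ℕ) (a : ℕ → ℕ) (A ρ δ S l : ℕ),
      A = μ * r / p → ρ = μ * r - p * A → δ = (if ρ = 0 then 1 else 0) →
      S = ∑ i ∈ Finset.Icc 1 p, a i →
      (∑ m ∈ Finset.Icc 1 (p - 1), m * a (m + 1)) = p * l + ρ →
      cA μ a = (1 / (μ : ℚ)) * (∏ j ∈ Finset.Icc 1 (μ * k - 1), ((j : ℚ) - (μ : ℚ) * k))
        / ((Nat.factorial A : ℚ) * (Nat.factorial (μ * s / p) : ℚ))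
        * ((∏ m ∈ Finset.Icc 1 (a 1 + l), ((A : ℚ) - (a 1 : ℚ) - (l : ℚ) + (m : ℚ)))
          / (∏ m ∈ Finset.range (a 1), ((a 1 : ℚ) - (m : ℚ) - (μ : ℚ) * k)))
        * ((∏ m ∈ Finset.Icc 1 (((S : ℤ) - (l : ℤ) - 1 + (δ : ℤ)).toNat),
            ((μ : ℚ) * k - (A : ℚ) + (l : ℚ) - (S : ℚ) + (m : ℚ)))
          / (∏ i ∈ Finset.Icc 1 p, (Nat.factorial (a i) : ℚ))))
    (hcA0 : ∀ (μ : ℕ) (a : ℕ → ℕ),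
      (¬ ∃ l : ℕ, (∑ m ∈ Finset.Icc 1 (p - 1), m * a (m + 1))
          = p * l + (μ * r - p * (μ * r / p))) →
      cA μ a = 0)
    (hcB1 : ∀ (μ : ℕ) (a : ℕ → ℕ) (b : ℕ),
      a 1 ≤ b → p * b + (∑ m ∈ Finset.Icc 1 (p - 1), m * a (m + 1)) = r * μ →
      cB μ a = (-1 : ℚ) ^ ((k : ℤ) * (μ : ℤ) - (a 1 : ℤ) - 1)
        * (∏ j ∈ Finset.Icc 1 ((∑ m ∈ Finset.Icc 2 p, a m) + b - 1),
            ((μ : ℚ) * k - (a 1 : ℚ) - (j : ℚ)))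
        / ((∏ i ∈ Finset.Icc 1 p, (Nat.factorial (a i) : ℚ))
          * (Nat.factorial (b - a 1) : ℚ) * (μ : ℚ)))
    (hcB0 : ∀ (μ : ℕ) (a : ℕ → ℕ),
      (¬ ∃ b : ℕ, a 1 ≤ b ∧
        p * b + (∑ m ∈ Finset.Icc 1 (p - 1), m * a (m + 1)) = r * μ) →
      cB μ a = 0) :
    ∀ (μ : ℕ), 1 ≤ μ → ∀ a : ℕ → ℕ, cA μ a = cB μ a := by
  intro μ hμ a
  obtain ⟨A, hAdef⟩ : ∃ A, A = μ * r / p := ⟨_, rfl⟩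
  obtain ⟨ρ, hρdef⟩ : ∃ ρ, ρ = μ * r - p * A := ⟨_, rfl⟩
  obtain ⟨δ, hδdef⟩ : ∃ δ : ℕ, δ = (if ρ = 0 then 1 else 0) := ⟨_, rfl⟩
  obtain ⟨n, hndef⟩ : ∃ n, n = μ * k := ⟨_, rfl⟩
  obtain ⟨T, hTdef⟩ : ∃ T, T = ∑ m ∈ Finset.Icc 2 p, a m := ⟨_, rfl⟩
  obtain ⟨Snat, hSdef⟩ : ∃ S, S = ∑ i ∈ Finset.Icc 1 p, a i := ⟨_, rfl⟩
  obtain ⟨Sig, hSigdef⟩ : ∃ S, S = ∑ m ∈ Finset.Icc 1 (p - 1), m * a (m + 1) := ⟨_, rfl⟩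
  -- basic arithmetic facts
  have hd1 : p * A + μ * r % p = μ * r := by rw [hAdef]; exact Nat.div_add_mod (μ * r) p
  have hd2 : μ * r % p < p := Nat.mod_lt _ hp
  have hA : μ * r = p * A + ρ := by omega
  have hρp : ρ < p := by omega
  have hrpk : r < p * k := by omega
  have hAn : A < n := by
    rw [hAdef, hndef, Nat.div_lt_iff_lt_mul hp]
    calc μ * r < μ * (p * k) := mul_lt_mul_of_pos_left hrpk (by omega)
      _ = μ * k * p := by ring
  have hμrpos : 0 < μ * r := Nat.mul_pos (by omega) hr
  have h5 : μ * r + μ * s = μ * (p * k) := by rw [← Nat.mul_add, hrs]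
  have hpn : μ * (p * k) = p * n := by rw [hndef]; ring
  have h6 : μ * s + p * A + ρ = p * n := by omega
  -- value of μ * s / p
  have hfacteq : μ * s / p = n - A - 1 + δ := by
    rcases Nat.eq_zero_or_pos ρ with h0 | h0
    · have hδ1 : δ = 1 := by rw [hδdef, if_pos h0]
      obtain ⟨t, ht⟩ : ∃ t, n = A + t := ⟨n - A, by omega⟩
      have hx : p * n = p * A + p * t := by rw [ht]; ring
      have hμs : μ * s = p * t := by omega
      rw [hμs, Nat.mul_div_cancel_left t hp]
      omega
    · have hδ0 : δ = 0 := by rw [hδdef, if_neg (by omega)]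
      obtain ⟨t, ht⟩ : ∃ t, n = A + 1 + t := ⟨n - A - 1, by omega⟩
      have hx : p * n = p * A + p + p * t := by rw [ht]; ring
      have hμs : μ * s = p * t + (p - ρ) := by omega
      rw [hμs, Nat.mul_add_div hp, Nat.div_eq_of_lt (by omega)]
      omega
  -- sum facts
  have hS : Snat = a 1 + T := by
    rw [hSdef, hTdef,
      show Finset.Icc 1 p = insert 1 (Finset.Icc 2 p) from by
        ext x; simp only [Finset.mem_Icc, Finset.mem_insert]; omega,
      Finset.sum_insert (by simp)]
  have hSigT : Sig ≤ (p - 1) * T := by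
    rw [hSigdef, hTdef, ← Finset.Ico_add_one_right_eq_Icc, ← Finset.Ico_add_one_right_eq_Icc,
      Finset.sum_Ico_eq_sum_range, Finset.sum_Ico_eq_sum_range,
      show p - 1 + 1 - 1 = p - 1 from by omega,
      show p + 1 - 2 = p - 1 from by omega]
    calc ∑ i ∈ Finset.range (p - 1), (1 + i) * a (1 + i + 1)
        ≤ ∑ i ∈ Finset.range (p - 1), (p - 1) * a (2 + i) := by
          apply Finset.sum_le_sum
          intro i hi
          rw [Finset.mem_range] at hi
          rw [show 1 + i + 1 = 2 + i from by omega]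
          exact Nat.mul_le_mul_right _ (by omega)
      _ = (p - 1) * ∑ i ∈ Finset.range (p - 1), a (2 + i) := (Finset.mul_sum _ _ _).symm
  by_cases hl : ∃ l : ℕ, Sig = p * l + ρ
  · obtain ⟨l, hlq⟩ := hl
    have hlq' : (∑ m ∈ Finset.Icc 1 (p - 1), m * a (m + 1)) = p * l + ρ := by
      rw [← hSigdef]; exact hlq
    by_cases h2a : l + a 1 ≤ A
    · -- main case: both formulas apply
      obtain ⟨b, hbA⟩ : ∃ b, A = b + l := ⟨A - l, by omega⟩
      have hab : a 1 ≤ b := by omega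
      have hbB : p * b + (∑ m ∈ Finset.Icc 1 (p - 1), m * a (m + 1)) = r * μ := by
        rw [← hSigdef]
        have h1 : p * A = p * b + p * l := by rw [hbA]; ring
        have h2 : r * μ = μ * r := Nat.mul_comm r μ
        omega
      have hαn : a 1 + 1 ≤ n := by omega
      -- the nonnegativity of S - l - 1 + δ
      have hlS : l + 1 ≤ Snat + δ := by
        have h1 : (p - 1) * T ≤ p * T := Nat.mul_le_mul_right T (by omega)
        rcases Nat.eq_zero_or_pos ρ with h0 | h0
        · have hδ1 : δ = 1 := by rw [hδdef, if_pos h0]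
          have h2 : p * l ≤ p * T := by omega
          have hlT : l ≤ T := Nat.le_of_mul_le_mul_left h2 hp
          omega
        · have hδ0 : δ = 0 := by rw [hδdef, if_neg (by omega)]
          have h2 : p * l < p * T := by omega
          have hlT : l < T := Nat.lt_of_mul_lt_mul_left h2
          omega
      have hY'cast : ((((Snat : ℤ) - (l : ℤ) - 1 + (δ : ℤ)).toNat : ℕ) : ℤ)
          = (Snat : ℤ) - (l : ℤ) - 1 + (δ : ℤ) := Int.toNat_of_nonneg (by omega)
      have hTb : 1 ≤ T + b := by
        by_contra hcon
        have hT0 : T = 0 := by omega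
        have hb0 : b = 0 := by omega
        have hSig0 : Sig = 0 := by
          have : (p - 1) * T = 0 := by rw [hT0]; ring
          omega
        have hl0 : l = 0 := by
          have hz : p * l = 0 := by omega
          rcases Nat.mul_eq_zero.1 hz with h | h
          · omega
          · exact h
        have hA0 : A = 0 := by omega
        have : p * A = 0 := by rw [hA0]; ring
        omega
      obtain ⟨X, hXdef⟩ : ∃ X, n - 1 = a 1 + X := ⟨n - 1 - a 1, by omega⟩
      obtain ⟨c0, hc0def⟩ : ∃ c0 : ℤ,
          c0 = (n : ℤ) - (a 1 : ℤ) - (T : ℤ) - (b : ℤ) := ⟨_, rfl⟩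
      -- rational cast facts
      have hnq : (μ : ℚ) * k = (n : ℚ) := by rw [hndef]; push_cast; ring
      have hAq : (A : ℚ) = (b : ℚ) + (l : ℚ) := by rw [hbA]; push_cast; ring
      have hSq : (Snat : ℚ) = (a 1 : ℚ) + (T : ℚ) := by rw [hS]; push_cast; ring
      have hc0q : ((c0 : ℤ) : ℚ) = (n : ℚ) - (a 1 : ℚ) - (T : ℚ) - (b : ℚ) := by
        rw [hc0def]; push_cast; ring
      -- product computations
      have e1 : (∏ j ∈ Finset.Icc 1 (μ * k - 1), ((j : ℚ) - (μ : ℚ) * k))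
          = prQ (-(n : ℚ)) (a 1) * ((-1) ^ X * (Nat.factorial X : ℚ)) := by
        have h1 : (∏ j ∈ Finset.Icc 1 (μ * k - 1), ((j : ℚ) - (μ : ℚ) * k))
            = prQ (-(n : ℚ)) (n - 1) := by
          rw [prQ, show μ * k - 1 = n - 1 from by omega]
          apply Finset.prod_congr rfl
          intro j _
          linear_combination -hnq
        rw [h1, hXdef, prQ_shift]
        congr 1
        rw [show -(n : ℚ) + ((a 1 : ℕ) : ℚ) = -((X : ℕ) : ℚ) - 1 from by
          have hx : ((X : ℕ) : ℚ) = (n : ℚ) - 1 - (a 1 : ℚ) := by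
            exact_mod_cast (show ((X : ℕ) : ℤ) = (n : ℤ) - 1 - (a 1 : ℤ) from by omega)
          linear_combination hx]
        exact prQ_neg_fact X
      have e2 : (∏ m ∈ Finset.range (a 1), ((a 1 : ℚ) - (m : ℚ) - (μ : ℚ) * k))
          = prQ (-(n : ℚ)) (a 1) := by
        calc (∏ m ∈ Finset.range (a 1), ((a 1 : ℚ) - (m : ℚ) - (μ : ℚ) * k))
            = ∏ m ∈ Finset.range (a 1), (((a 1 : ℚ) - (n : ℚ)) - (m : ℚ)) :=
              Finset.prod_congr rfl (fun m _ => by linear_combination -hnq)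
          _ = prQ ((a 1 : ℚ) - (n : ℚ) - (a 1 : ℚ)) (a 1) := prod_desc_range _ _
          _ = prQ (-(n : ℚ)) (a 1) := by
              rw [show (a 1 : ℚ) - (n : ℚ) - (a 1 : ℚ) = -(n : ℚ) from by ring]
      have hbα : ((b - a 1 : ℕ) : ℚ) = (b : ℚ) - (a 1 : ℚ) := by
        exact_mod_cast (show ((b - a 1 : ℕ) : ℤ) = (b : ℤ) - (a 1 : ℤ) from by omega)
      have e3 : (∏ m ∈ Finset.Icc 1 (a 1 + l), ((A : ℚ) - (a 1 : ℚ) - (l : ℚ) + (m : ℚ)))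
          = prQ (((b - a 1 : ℕ)) : ℚ) (a 1 + l) := by
        rw [prQ]
        apply Finset.prod_congr rfl
        intro m _
        rw [hbα]
        linear_combination hAq
      have e4 : (∏ m ∈ Finset.Icc 1 (((Snat : ℤ) - (l : ℤ) - 1 + (δ : ℤ)).toNat),
            ((μ : ℚ) * k - (A : ℚ) + (l : ℚ) - (Snat : ℚ) + (m : ℚ)))
          = prQ ((c0 : ℚ)) (((Snat : ℤ) - (l : ℤ) - 1 + (δ : ℤ)).toNat) := by
        rw [prQ]
        apply Finset.prod_congr rfl
        intro m _
        linear_combination hnq - hAq - hSq - hc0q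
      have hX'q : ((T + b - 1 : ℕ) : ℚ) = (T : ℚ) + (b : ℚ) - 1 := by
        exact_mod_cast (show ((T + b - 1 : ℕ) : ℤ) = (T : ℤ) + (b : ℤ) - 1 from by omega)
      have e5 : (∏ j ∈ Finset.Icc 1 ((∑ m ∈ Finset.Icc 2 p, a m) + b - 1),
            ((μ : ℚ) * k - (a 1 : ℚ) - (j : ℚ)))
          = prQ ((c0 : ℚ)) (T + b - 1) := by
        rw [show (∑ m ∈ Finset.Icc 2 p, a m) + b - 1 = T + b - 1 from by rw [hTdef], prod_desc]
        congr 1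
        rw [hX'q]
        linear_combination hnq - hc0q
      have e6 : (-1 : ℚ) ^ ((k : ℤ) * (μ : ℤ) - (a 1 : ℤ) - 1)
          = (-1 : ℚ) ^ X := by
        rw [show (k : ℤ) * (μ : ℤ) - (a 1 : ℤ) - 1 = ((X : ℕ) : ℤ) from by
          have hnk : ((n : ℕ) : ℤ) = (k : ℤ) * (μ : ℤ) := by rw [hndef]; push_cast; ring
          omega]
        exact zpow_natCast _ _
      -- key combinatorial identities
      have K1 : (Nat.factorial X : ℚ)
            * prQ ((c0 : ℚ)) (((Snat : ℤ) - (l : ℤ) - 1 + (δ : ℤ)).toNat)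
          = (Nat.factorial (n - A - 1 + δ) : ℚ) * prQ ((c0 : ℚ)) (T + b - 1) := by
        have h := prQ_key c0 X (n - A - 1 + δ) (T + b - 1)
          (((Snat : ℤ) - (l : ℤ) - 1 + (δ : ℤ)).toNat)
          (by rw [hc0def]; omega) (by rw [hc0def]; omega)
        rw [prQ_fact, prQ_fact] at h
        exact h
      have K2 : (Nat.factorial (b - a 1) : ℚ) * prQ (((b - a 1 : ℕ)) : ℚ) (a 1 + l)
          = (Nat.factorial A : ℚ) := by
        have h := prQ_fact_mul (b - a 1) (a 1 + l)
        rw [show b - a 1 + (a 1 + l) = A from by omega] at h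
        exact h
      -- nonvanishing
      have hFa : (∏ i ∈ Finset.Icc 1 p, (Nat.factorial (a i) : ℚ)) ≠ 0 := by
        apply Finset.prod_ne_zero_iff.2
        intro i _
        exact Nat.cast_ne_zero.2 (Nat.factorial_ne_zero _)
      have hμ0 : (μ : ℚ) ≠ 0 := Nat.cast_ne_zero.2 (by omega)
      have hprne : prQ (-(n : ℚ)) (a 1) ≠ 0 := prQ_ne_zero_of_lt n (a 1) (by omega)
      have hfA : (Nat.factorial A : ℚ) ≠ 0 := Nat.cast_ne_zero.2 (Nat.factorial_ne_zero _)
      have hfY : (Nat.factorial (n - A - 1 + δ) : ℚ) ≠ 0 :=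
        Nat.cast_ne_zero.2 (Nat.factorial_ne_zero _)
      have hfb : (Nat.factorial (b - a 1) : ℚ) ≠ 0 :=
        Nat.cast_ne_zero.2 (Nat.factorial_ne_zero _)
      have hfX : (Nat.factorial X : ℚ) ≠ 0 := Nat.cast_ne_zero.2 (Nat.factorial_ne_zero _)
      rw [hcB1 μ a b hab hbB, hcA1 μ a A ρ δ Snat l hAdef hρdef hδdef hSdef hlq',
        hfacteq, e1, e2, e3, e4, e5, e6]
      have K2' : (Nat.factorial (b - a 1) : ℚ) * prQ ((b : ℚ) - (a 1 : ℚ)) (a 1 + l)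
          = (Nat.factorial A : ℚ) := by rw [← hbα]; exact K2
      field_simp
      linear_combination
        ((Nat.factorial X : ℚ)
            * prQ ((c0 : ℚ)) (((Snat : ℤ) - (l : ℤ) - 1 + (δ : ℤ)).toNat)) * K2
        + ((Nat.factorial A : ℚ)) * K1
    · -- b would be < a 1 : cB = 0 and the cA formula vanishes
      rw [hcB0 μ a (by
        rintro ⟨b, hb1, hb2⟩
        rw [← hSigdef] at hb2
        have h2 : r * μ = μ * r := Nat.mul_comm r μ
        have h3 : p * b + p * l = p * A := by omega
        have h4 : p * (b + l) = p * A := by rw [Nat.mul_add]; omega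
        have h5' : b + l = A := Nat.eq_of_mul_eq_mul_left hp h4
        omega),
        hcA1 μ a A ρ δ Snat l hAdef hρdef hδdef hSdef hlq']
      have hz : (∏ m ∈ Finset.Icc 1 (a 1 + l), ((A : ℚ) - (a 1 : ℚ) - (l : ℚ) + (m : ℚ))) = 0 := by
        apply Finset.prod_eq_zero (i := a 1 + l - A) (Finset.mem_Icc.2 ⟨by omega, by omega⟩)
        have hc : ((a 1 + l - A : ℕ) : ℚ) = (a 1 : ℚ) + (l : ℚ) - (A : ℚ) := by
          exact_mod_cast (show ((a 1 + l - A : ℕ) : ℤ) = (a 1 : ℤ) + (l : ℤ) - (A : ℤ) from by omega)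
        rw [hc]; ring
      rw [hz, zero_div, mul_zero, zero_mul]
  · -- no l exists : both sides vanish
    have hl' : ¬ ∃ l : ℕ, (∑ m ∈ Finset.Icc 1 (p - 1), m * a (m + 1))
        = p * l + (μ * r - p * (μ * r / p)) := by
      rw [← hAdef, ← hρdef, ← hSigdef]; exact hl
    rw [hcA0 μ a hl', hcB0 μ a (by
      rintro ⟨b, hb1, hb2⟩
      apply hl
      rw [← hSigdef] at hb2
      have h2 : r * μ = μ * r := Nat.mul_comm r μ
      have hbA : b ≤ A := by
        by_contra hcon
        have hle : p * (A + 1) ≤ p * b := Nat.mul_le_mul_left p (by omega)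
        have hx : p * (A + 1) = p * A + p := by ring
        omega
      obtain ⟨l, hlb⟩ : ∃ l, A = b + l := ⟨A - b, by omega⟩
      refine ⟨l, ?_⟩
      have h3 : p * A = p * b + p * l := by rw [hlb]; ring
      omega)]
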